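/- If the triple (O, π_leaf, π_node) is strongly decomposable, then for every type A, every relation R : A → A → Type, and any two double trees d₀, d₁ : Tree I (Tree I A), if Γ(Γ(R)) d₀ d₁ holds then Γ(R) (μ d₀) (μ d₁) holds. -/

import Mathlib

set_option autoImplicit false

universe u v w

/-! ### Tests -/

inductive Test (A : Type u) : Type u
  | atom (a : A)
  | tru
  | fls
  | and (t₁ t₂ : Test A)
  | or (t₁ t₂ : Test A)
  | all (ts : ℕ → Test A)
  | ex (ts : ℕ → Test A)

/-- Interpretation of tests as types. -/
def liftTest {A : Type u} (P : A → Type w) : Test A → Type w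
  | .atom a => P a
  | .tru => PUnit
  | .fls => PEmpty
  | .and t₁ t₂ => liftTest P t₁ × liftTest P t₂
  | .or t₁ t₂ => liftTest P t₁ ⊕ liftTest P t₂
  | .all ts => (n : ℕ) → liftTest P (ts n)
  | .ex ts => (n : ℕ) × liftTest P (ts n)

def mapTest {A : Type u} {B : Type v} (f : A → B) : Test A → Test B
  | .atom a => .atom (f a)
  | .tru => .tru
  | .fls => .fls
  | .and t₁ t₂ => .and (mapTest f t₁) (mapTest f t₂)
  | .or t₁ t₂ => .or (mapTest f t₁) (mapTest f t₂)
  | .all ts => .all (fun n => mapTest f (ts n))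
  | .ex ts => .ex (fun n => mapTest f (ts n))

/-- The dual of a test. -/
def dualTest {A : Type u} : Test A → Test A
  | .atom a => .atom a
  | .tru => .fls
  | .fls => .tru
  | .and t₁ t₂ => .or (dualTest t₁) (dualTest t₂)
  | .or t₁ t₂ => .and (dualTest t₁) (dualTest t₂)
  | .all ts => .ex (fun n => dualTest (ts n))
  | .ex ts => .all (fun n => dualTest (ts n))

/-! ### Coinductive trees, as an M-type -/

def CTreeP (K : Type) (I : K → Type) (A : Type v) : PFunctor.{v} :=
  ⟨A ⊕ ULift.{v} K, Sum.elim (fun _ => PEmpty.{v+1}) (fun k => ULift.{v} (I k.down))⟩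

/-- Coinductive trees with `A`-labelled leaves and `K`-labelled nodes of arity `I k`. -/
def CTree (K : Type) (I : K → Type) (A : Type v) : Type v := (CTreeP K I A).M

namespace CTree

variable {K : Type} {I : K → Type} {A : Type v}

def leaf (a : A) : CTree K I A :=
  PFunctor.M.mk ⟨Sum.inl a, fun e => e.elim⟩

def node (k : K) (ts : I k → CTree K I A) : CTree K I A :=
  PFunctor.M.mk ⟨Sum.inr ⟨k⟩, fun i => ts i.down⟩

/-- Monad multiplication on trees: `mu (leaf t) = t`, `mu (node k ts) = node k (mu ∘ ts)`. -/
def mu (d : CTree K I (CTree K I A)) : CTree K I A :=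
  PFunctor.M.corec
    (fun (s : CTree K I (CTree K I A) ⊕ CTree K I A) =>
      match s with
      | Sum.inl d' =>
          match PFunctor.M.dest d' with
          | ⟨Sum.inl t, _⟩ =>
              (match PFunctor.M.dest t with
              | ⟨Sum.inl a, _⟩ => ⟨Sum.inl a, fun e => e.elim⟩
              | ⟨Sum.inr k, ts⟩ => ⟨Sum.inr k, fun i => Sum.inr (ts i)⟩)
          | ⟨Sum.inr k, ds⟩ => ⟨Sum.inr k, fun i => Sum.inl (ds i)⟩
      | Sum.inr t =>
          match PFunctor.M.dest t with
          | ⟨Sum.inl a, _⟩ => ⟨Sum.inl a, fun e => e.elim⟩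
          | ⟨Sum.inr k, ts⟩ => ⟨Sum.inr k, fun i => Sum.inr (ts i)⟩)
    (Sum.inl d)

end CTree
/-! ### The inductive predicate lifting α -/

section PredLift

variable {K : Type} {I : K → Type} {O : Type}

mutual
  /-- The inductive algebra `α`, parametrized directly by the leaf predicate `P`:
      `Alpha πl πn P o t` corresponds to `α o (mapTree P t)` in the paper. -/
  inductive Alpha {K : Type} {I : K → Type} {O : Type}
      (πl : O → Bool) (πn : (k : K) → O → Test (I k × O))
      {A : Type v} (P : A → Type w) : O → CTree K I A → Type (max v w)
    | leaf {o : O} {a : A} (b : πl o = true) (p : P a) :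
        Alpha πl πn P o (CTree.leaf a)
    | node {o : O} {k : K} {Ps : I k → CTree K I A}
        (ps : AlphaT πl πn P (πn k o) Ps) :
        Alpha πl πn P o (CTree.node k Ps)

  /-- Inductive presentation of `liftTest (fun (x, o') => Alpha πl πn P o' (Ps x)) s`. -/
  inductive AlphaT {K : Type} {I : K → Type} {O : Type}
      (πl : O → Bool) (πn : (k : K) → O → Test (I k × O))
      {A : Type v} (P : A → Type w) :
      {k : K} → Test (I k × O) → (I k → CTree K I A) → Type (max v w)
    | atom {k : K} {x : I k} {o : O} {Ps : I k → CTree K I A}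
        (p : Alpha πl πn P o (Ps x)) : AlphaT πl πn P (.atom (x, o)) Ps
    | tru {k : K} {Ps : I k → CTree K I A} : AlphaT πl πn P .tru Ps
    | and {k : K} {t₁ t₂ : Test (I k × O)} {Ps : I k → CTree K I A}
        (p₁ : AlphaT πl πn P t₁ Ps) (p₂ : AlphaT πl πn P t₂ Ps) :
        AlphaT πl πn P (.and t₁ t₂) Ps
    | orl {k : K} {t₁ t₂ : Test (I k × O)} {Ps : I k → CTree K I A}
        (p : AlphaT πl πn P t₁ Ps) : AlphaT πl πn P (.or t₁ t₂) Ps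
    | orr {k : K} {t₁ t₂ : Test (I k × O)} {Ps : I k → CTree K I A}
        (p : AlphaT πl πn P t₂ Ps) : AlphaT πl πn P (.or t₁ t₂) Ps
    | all {k : K} {ts : ℕ → Test (I k × O)} {Ps : I k → CTree K I A}
        (ps : (n : ℕ) → AlphaT πl πn P (ts n) Ps) : AlphaT πl πn P (.all ts) Ps
    | ex {k : K} {ts : ℕ → Test (I k × O)} {Ps : I k → CTree K I A}
        (n : ℕ) (p : AlphaT πl πn P (ts n) Ps) : AlphaT πl πn P (.ex ts) Ps
end

/-- The inductive `O`-indexed predicate lifting. -/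
def liftTree (πl : O → Bool) (πn : (k : K) → O → Test (I k × O))
    (o : O) {A : Type v} (P : A → Type w) (t : CTree K I A) : Type (max v w) :=
  Alpha πl πn P o t

/-! ### The coinductive predicate lifting β, encoded as an M-type of raw proof
trees carrying a (coinductively defined) well-formedness invariant. -/

/-- Selections through a test: the container shapes of `liftTest`. -/
inductive Sel {X : Type} : Test X → Type
  | atom (x : X) : Sel (.atom x)
  | tru : Sel .tru
  | and {t₁ t₂ : Test X} (c₁ : Sel t₁) (c₂ : Sel t₂) : Sel (.and t₁ t₂)
  | orl {t₁ t₂ : Test X} (c : Sel t₁) : Sel (.or t₁ t₂)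
  | orr {t₁ t₂ : Test X} (c : Sel t₂) : Sel (.or t₁ t₂)
  | all {ts : ℕ → Test X} (cs : (n : ℕ) → Sel (ts n)) : Sel (.all ts)
  | ex {ts : ℕ → Test X} (n : ℕ) (c : Sel (ts n)) : Sel (.ex ts)

/-- The atoms reached by a selection, with their labels:
`liftTest Q s ≃ Σ c : Sel s, ∀ x, Sel.At c x → Q x`. -/
inductive Sel.At {X : Type} : {s : Test X} → Sel s → X → Type
  | atom (x : X) : Sel.At (.atom x) x
  | andl {t₁ t₂ : Test X} {c₁ : Sel t₁} {c₂ : Sel t₂} {x : X}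
      (h : Sel.At c₁ x) : Sel.At (.and c₁ c₂) x
  | andr {t₁ t₂ : Test X} {c₁ : Sel t₁} {c₂ : Sel t₂} {x : X}
      (h : Sel.At c₂ x) : Sel.At (.and c₁ c₂) x
  | orl {t₁ t₂ : Test X} {c : Sel t₁} {x : X}
      (h : Sel.At c x) : Sel.At (.orl (t₂ := t₂) c) x
  | orr {t₁ t₂ : Test X} {c : Sel t₂} {x : X}
      (h : Sel.At c x) : Sel.At (.orr (t₁ := t₁) c) x
  | all {ts : ℕ → Test X} {cs : (n : ℕ) → Sel (ts n)} (n : ℕ) {x : X}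
      (h : Sel.At (cs n) x) : Sel.At (.all cs) x
  | ex {ts : ℕ → Test X} {n : ℕ} {c : Sel (ts n)} {x : X}
      (h : Sel.At c x) : Sel.At (.ex n c) x

variable (πl : O → Bool) (πn : (k : K) → O → Test (I k × O))

/-- Shapes of raw proof trees for the coinductive lifting specified by `(πl, πn)`:
either leaf evidence (a proof of the leaf predicate, or evidence that the
observation is not correct for termination), or a selection through the test
at a node. -/
def BetaShape {A : Type v} (P : A → Type w) : Type (max v w) :=
  (Σ' (o : O) (a : A), PSum (P a) (πl o = false)) ⊕ (Σ' (k : K) (o : O), Sel (πn k o))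

end PredLift
section Beta

variable {K : Type} {I : K → Type} {O : Type}
variable (πl : O → Bool) (πn : (k : K) → O → Test (I k × O))

/-- The polynomial functor of raw proof trees for the coinductive lifting. -/
def BetaPF {A : Type v} (P : A → Type w) : PFunctor.{max v w} :=
  ⟨BetaShape πl πn P,
   Sum.elim (fun _ => PEmpty.{(max v w)+1})
     (fun s => ULift.{max v w} ((x : I s.1 × O) × Sel.At s.2.2 x))⟩

/-- Raw (coinductive) proof trees for the coinductive lifting. -/
def BetaPf {A : Type v} (P : A → Type w) : Type (max v w) := (BetaPF πl πn P).M

/-- One step of well-formedness of a raw proof tree with respect to an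
observation and a tree. -/
def BetaWFStep {A : Type v} (P : A → Type w)
    (R : BetaPf πl πn P → O → CTree K I A → Prop)
    (pf : BetaPf πl πn P) (o : O) (t : CTree K I A) : Prop :=
  match PFunctor.M.dest pf, PFunctor.M.dest t with
  | ⟨Sum.inl ⟨o', a', _⟩, _⟩, ⟨Sum.inl a, _⟩ => o' = o ∧ a' = a
  | ⟨Sum.inr ⟨k', o', c⟩, ch⟩, ⟨Sum.inr k, ts⟩ =>
      o' = o ∧ ∃ h : k' = k.down,
        ∀ (x : I k' × O) (hx : Sel.At c x),
          R (ch ⟨⟨x, hx⟩⟩) x.2 (ts ⟨h ▸ x.1⟩)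
  | _, _ => False

/-- Well-formedness (the coinductive component of `β`), as a greatest fixed
point: an invariant closed under one-step unfolding. -/
def BetaWF {A : Type v} (P : A → Type w)
    (pf : BetaPf πl πn P) (o : O) (t : CTree K I A) : Prop :=
  ∃ R : BetaPf πl πn P → O → CTree K I A → Prop,
    (∀ pf o t, R pf o t → BetaWFStep πl πn P R pf o t) ∧ R pf o t

/-- The coinductive algebra `β` specified by `(πl, πn)`, parametrized directly
by the leaf predicate `P`: `Beta πl πn P o t` corresponds to
`β o (mapTree P t)` in the paper. -/
def Beta {A : Type v} (P : A → Type w) (o : O) (t : CTree K I A) : Type (max v w) :=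
  Σ' pf : BetaPf πl πn P, BetaWF πl πn P pf o t

/-- The coinductive `O`-indexed predicate lifting, forming a complementing
pair with `liftTree`: it is specified by `πl` and the dual of `πn`. -/
def coliftTree (o : O) {A : Type v} (P : A → Type w) (t : CTree K I A) : Type (max v w) :=
  Beta πl (fun k o' => dualTest (πn k o')) P o t

end Beta
section Gamma

variable {K : Type} {I : K → Type} {O : Type}

/-- `R`-correctness of a predicate. -/
def RCorrect {A : Type v} (R : A → A → Type u) (f : A → Type) : Type (max v u) :=
  ∀ a b, f a → R a b → f b

variable (πl : O → Bool) (πn : (k : K) → O → Test (I k × O))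

/-- The relation lifting `Γ`. -/
def Gamma {A : Type v} (R : A → A → Type u) (t₀ t₁ : CTree K I A) : Type (max v u 1) :=
  ∀ (f : A → Type), RCorrect R f → ∀ o : O,
    (liftTree πl πn o f t₀ → liftTree πl πn o f t₁) ×
    (coliftTree πl πn o f t₀ → coliftTree πl πn o f t₁)

end Gamma

section Lang

variable (K : Type) (I : K → Type) (O : Type)

inductive Ty : Type
  | nat
  | arrow (σ ρ : Ty)
  | prod (σ ρ : Ty)
  | u (σ : Ty)

def Val : Ty → Type
  | .nat => ℕ
  | .arrow σ ρ => Val σ → CTree K I (Val ρ)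
  | .prod σ ρ => Val σ × Val ρ
  | .u σ => CTree K I (Val σ)

def Cpt (σ : Ty) : Type := CTree K I (Val K I σ)

inductive Srt : Type
  | val
  | cpt

def Tm : Srt → Ty → Type
  | .val, σ => Val K I σ
  | .cpt, σ => Cpt K I σ

mutual
  /-- Behavioural formulae. -/
  inductive Form : Srt → Ty → Type
    | eq (n : ℕ) : Form .val .nat
    | neq (n : ℕ) : Form .val .nat
    | mapsto {σ ρ : Ty} (V : Val K I σ) (φ : Form .cpt ρ) : Form .val (.arrow σ ρ)
    | fst {σ ρ : Ty} (φ : Form .val σ) : Form .val (.prod σ ρ)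
    | snd {σ ρ : Ty} (φ : Form .val ρ) : Form .val (.prod σ ρ)
    | thunk {σ : Ty} (φ : Form .cpt σ) : Form .val (.u σ)
    | test {b : Srt} {σ : Ty} (φs : FTest b σ) : Form b σ
    | obsA {σ : Ty} (o : O) (φ : Form .val σ) : Form .cpt σ
    | obsB {σ : Ty} (o : O) (φ : Form .val σ) : Form .cpt σ

  /-- Tests of formulae: the grammar `Test` instantiated at `Form b σ`
  (inlined, as Lean does not accept the nested occurrence). -/
  inductive FTest : Srt → Ty → Type
    | atom {b : Srt} {σ : Ty} (φ : Form b σ) : FTest b σ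
    | tru {b : Srt} {σ : Ty} : FTest b σ
    | fls {b : Srt} {σ : Ty} : FTest b σ
    | and {b : Srt} {σ : Ty} (t₁ t₂ : FTest b σ) : FTest b σ
    | or {b : Srt} {σ : Ty} (t₁ t₂ : FTest b σ) : FTest b σ
    | all {b : Srt} {σ : Ty} (ts : ℕ → FTest b σ) : FTest b σ
    | ex {b : Srt} {σ : Ty} (ts : ℕ → FTest b σ) : FTest b σ
end

end Lang

section Neg

variable {K : Type} {I : K → Type} {O : Type}

/-- `FTest b σ` realizes `Test (Form b σ)`. -/
def toFTest {b : Srt} {σ : Ty} : Test (Form K I O b σ) → FTest K I O b σ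
  | .atom φ => .atom φ
  | .tru => .tru
  | .fls => .fls
  | .and t₁ t₂ => .and (toFTest t₁) (toFTest t₂)
  | .or t₁ t₂ => .or (toFTest t₁) (toFTest t₂)
  | .all ts => .all (fun n => toFTest (ts n))
  | .ex ts => .ex (fun n => toFTest (ts n))

/-- The formula `test φs` for a test of formulae `φs : Test (Form b σ)`. -/
def Form.mkTest {b : Srt} {σ : Ty} (φs : Test (Form K I O b σ)) : Form K I O b σ :=
  .test (toFTest φs)

mutual
  /-- Negation of formulae. -/
  def negFma : {b : Srt} → {σ : Ty} → Form K I O b σ → Form K I O b σ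
    | _, _, .eq n => .neq n
    | _, _, .neq n => .eq n
    | _, _, .mapsto V φ => .mapsto V (negFma φ)
    | _, _, .fst φ => .fst (negFma φ)
    | _, _, .snd φ => .snd (negFma φ)
    | _, _, .thunk φ => .thunk (negFma φ)
    | _, _, .test φs => .test (negFTest φs)
    | _, _, .obsA o φ => .obsB o (negFma φ)
    | _, _, .obsB o φ => .obsA o (negFma φ)

  /-- The action of `mapTest negFma` on tests of formulae. -/
  def negFTest : {b : Srt} → {σ : Ty} → FTest K I O b σ → FTest K I O b σ
    | _, _, .atom φ => .atom (negFma φ)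
    | _, _, .tru => .tru
    | _, _, .fls => .fls
    | _, _, .and t₁ t₂ => .and (negFTest t₁) (negFTest t₂)
    | _, _, .or t₁ t₂ => .or (negFTest t₁) (negFTest t₂)
    | _, _, .all ts => .all (fun n => negFTest (ts n))
    | _, _, .ex ts => .ex (fun n => negFTest (ts n))
end

end Neg
section Sat

variable {K : Type} {I : K → Type} {O : Type}
variable (πl : O → Bool) (πn : (k : K) → O → Test (I k × O))

mutual
  /-- Satisfaction of formulae by terms: `Sat πl πn φ P` is `P ⊨ φ`. -/
  def Sat : {b : Srt} → {σ : Ty} → Form K I O b σ → Tm K I b σ → Type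
    | _, _, .eq n, m => PLift (m = n)
    | _, _, .neq n, m => PLift (m ≠ n)
    | _, _, .mapsto V φ, W => Sat φ (W V)
    | _, _, .fst φ, p => Sat φ p.1
    | _, _, .snd φ, p => Sat φ p.2
    | _, _, .thunk φ, V => Sat (b := .cpt) φ V
    | _, _, .test φs, P => SatTest φs P
    | _, _, .obsA o φ, M => liftTree πl πn o (fun V => Sat φ V) M
    | _, _, .obsB o φ, M => coliftTree πl πn o (fun V => Sat φ V) M

  /-- Satisfaction of tests of formulae: realizes `liftTest (fun φ => Sat πl πn φ P) φs`. -/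
  def SatTest : {b : Srt} → {σ : Ty} → FTest K I O b σ → Tm K I b σ → Type
    | _, _, .atom φ, P => Sat φ P
    | _, _, .tru, _ => PUnit
    | _, _, .fls, _ => PEmpty
    | _, _, .and t₁ t₂, P => SatTest t₁ P × SatTest t₂ P
    | _, _, .or t₁ t₂, P => SatTest t₁ P ⊕ SatTest t₂ P
    | _, _, .all ts, P => (n : ℕ) → SatTest (ts n) P
    | _, _, .ex ts, P => (n : ℕ) × SatTest (ts n) P
end

end Sat
section Decomp

variable {K : Type} {I : K → Type} {O : Type}
variable (πl : O → Bool) (πn : (k : K) → O → Test (I k × O))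

/-- The algebra `α` on trees of types. -/
def algA (o : O) (t : CTree K I Type) : Type 1 :=
  Alpha πl πn (fun X => X) o t

/-- The algebra `β` on trees of types (as part of the complementing pair, it
is specified by `πl` and the dual of `πn`). -/
def algB (o : O) (t : CTree K I Type) : Type 1 :=
  coliftTree πl πn o (fun X => X) t

/-- The extensional order `⊑` on double trees. -/
def DTLe (d₀ d₁ : CTree K I (CTree K I Type)) : Type 1 :=
  ∀ o₀ o₁ : O,
    (liftTree πl πn o₀ (algA πl πn o₁) d₀ → liftTree πl πn o₀ (algA πl πn o₁) d₁) ×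
    (coliftTree πl πn o₀ (algB πl πn o₁) d₀ → coliftTree πl πn o₀ (algB πl πn o₁) d₁)

/-- The extensional order `⊑` on single trees. -/
def STLe (t₀ t₁ : CTree K I Type) : Type 1 :=
  ∀ o : O, (algA πl πn o t₀ → algA πl πn o t₁) × (algB πl πn o t₀ → algB πl πn o t₁)

/-- Strong decomposability of `(O, πl, πn)`. -/
def StronglyDecomposable : Type 1 :=
  ∀ d₀ d₁ : CTree K I (CTree K I Type),
    DTLe πl πn d₀ d₁ → STLe πl πn (CTree.mu d₀) (CTree.mu d₁)

/-- `πd` is an `α`-decomposition. -/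
def IsAlphaDecomposition (πd : O → Test (O × O)) : Type 1 :=
  ∀ (d : CTree K I (CTree K I Type)) (o : O),
    (algA πl πn o (CTree.mu d) →
      liftTest (fun p => liftTree πl πn p.1 (algA πl πn p.2) d) (πd o)) ×
    (liftTest (fun p => liftTree πl πn p.1 (algA πl πn p.2) d) (πd o) →
      algA πl πn o (CTree.mu d))

/-- `πd` is a `β`-decomposition. -/
def IsBetaDecomposition (πd : O → Test (O × O)) : Type 1 :=
  ∀ (d : CTree K I (CTree K I Type)) (o : O),
    (algB πl πn o (CTree.mu d) →
      liftTest (fun p => coliftTree πl πn p.1 (algB πl πn p.2) d) (πd o)) ×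
    (liftTest (fun p => coliftTree πl πn p.1 (algB πl πn p.2) d) (πd o) →
      algB πl πn o (CTree.mu d))

/-- The formula `(πd o)_α[φ]`. -/
def decompFormA (πd : O → Test (O × O)) (o : O) {τ : Ty} (φ : Form K I O .val τ) :
    Form K I O .cpt (.u τ) :=
  Form.mkTest (mapTest (fun p => .obsA p.1 (.thunk (.obsA p.2 φ))) (πd o))

/-- The formula `(πd o)_β[φ]`. -/
def decompFormB (πd : O → Test (O × O)) (o : O) {τ : Ty} (φ : Form K I O .val τ) :
    Form K I O .cpt (.u τ) :=
  Form.mkTest (mapTest (fun p => .obsB p.1 (.thunk (.obsB p.2 φ))) (πd o))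

end Decomp

section Sim

variable {K : Type} {I : K → Type} {O : Type}
variable (πl : O → Bool) (πn : (k : K) → O → Test (I k × O))

/-- Well-typed relations on terms. -/
def WtRel (K : Type) (I : K → Type) : Type 1 :=
  (b : Srt) → (τ : Ty) → Tm K I b τ → Tm K I b τ → Type

/-- Applicative `Γ`-simulations. -/
structure IsSimulation (R : WtRel K I) : Type 1 where
  natCond : ∀ n m : Tm K I .val .nat, R .val .nat n m → n = m
  arrowCond : ∀ {σ τ : Ty} (V W : Tm K I .val (.arrow σ τ)),
    R .val (.arrow σ τ) V W → ∀ U : Val K I σ, R .cpt τ (V U) (W U)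
  prodCond : ∀ {σ τ : Ty} (V W : Tm K I .val (.prod σ τ)),
    R .val (.prod σ τ) V W → R .val σ V.1 W.1 × R .val τ V.2 W.2
  thunkCond : ∀ {σ : Ty} (V W : Tm K I .val (.u σ)),
    R .val (.u σ) V W → R .cpt σ V W
  cptCond : ∀ {τ : Ty} (M N : Tm K I .cpt τ),
    R .cpt τ M N → Gamma πl πn (R .val τ) M N

/-- Applicative `Γ`-similarity. -/
def AppSimilar {b : Srt} {τ : Ty} (P Q : Tm K I b τ) : Type 1 :=
  Σ R : WtRel K I, IsSimulation πl πn R × R b τ P Q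

/-- Applicative `Γ`-bisimilarity. -/
def Bisimilar {b : Srt} {τ : Ty} (P Q : Tm K I b τ) : Type 1 :=
  Σ R : WtRel K I,
    IsSimulation πl πn R × (∀ b τ P Q, R b τ P Q → R b τ Q P) × R b τ P Q

end Sim

/-- Reflexive-transitive closure of a `Type`-valued relation. -/
inductive RTC {A : Type u} (R : A → A → Type u) : A → A → Type u
  | refl (a : A) : RTC R a a
  | tail {a b c : A} (h : RTC R a b) (h' : R b c) : RTC R a c

section Aux
namespace CTreeAux

open CTree

variable {K : Type} {I : K → Type}

/-- Functorial map on coinductive trees. -/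
def tmap {A : Type v} {B : Type w} (g : A → B) (t : CTree K I A) : CTree K I B :=
  PFunctor.M.corec
    (fun (t : CTree K I A) =>
      match PFunctor.M.dest t with
      | ⟨Sum.inl a, _⟩ => (⟨Sum.inl (g a), fun e => e.elim⟩ : (CTreeP K I B) (CTree K I A))
      | ⟨Sum.inr k, ts⟩ => ⟨Sum.inr ⟨k.down⟩, fun i => ts ⟨i.down⟩⟩)
    t

theorem eq_of_dest_eq {A : Type v} {t t' : CTree K I A}
    (h : PFunctor.M.dest t = PFunctor.M.dest t') : t = t' := by
  rw [← PFunctor.M.mk_dest t, ← PFunctor.M.mk_dest t', h]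

theorem dest_leaf {A : Type v} (a : A) :
    PFunctor.M.dest (CTree.leaf (K := K) (I := I) a)
      = ⟨Sum.inl a, fun e => e.elim⟩ := by
  unfold CTree.leaf; exact PFunctor.M.dest_mk _

theorem dest_node {A : Type v} (k : K) (ts : I k → CTree K I A) :
    PFunctor.M.dest (CTree.node k ts) = ⟨Sum.inr ⟨k⟩, fun i => ts i.down⟩ := by
  unfold CTree.node; exact PFunctor.M.dest_mk _

theorem dest_tmap_leaf {A : Type v} {B : Type w} (g : A → B) {t : CTree K I A}
    {a : A} {ch} (h : PFunctor.M.dest t = ⟨Sum.inl a, ch⟩) :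
    PFunctor.M.dest (tmap (K := K) (I := I) g t) = ⟨Sum.inl (g a), fun e => e.elim⟩ := by
  unfold tmap
  rw [PFunctor.M.dest_corec, h]
  simp only [PFunctor.map_eq]
  congr
  exact Sigma.ext rfl (heq_of_eq (funext fun e => PEmpty.elim e))

theorem dest_tmap_node {A : Type v} {B : Type w} (g : A → B) {t : CTree K I A}
    {k : ULift K} {ts} (h : PFunctor.M.dest t = ⟨Sum.inr k, ts⟩) :
    PFunctor.M.dest (tmap (K := K) (I := I) g t)
      = ⟨Sum.inr ⟨k.down⟩, fun i => tmap g (ts ⟨i.down⟩)⟩ := by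
  unfold tmap
  rw [PFunctor.M.dest_corec, h]
  simp only [PFunctor.map_eq]
  rfl

theorem tmap_leaf {A : Type v} {B : Type w} (g : A → B) (a : A) :
    tmap (K := K) (I := I) g (CTree.leaf a) = CTree.leaf (g a) :=
  eq_of_dest_eq (by rw [dest_tmap_leaf g (dest_leaf a), dest_leaf])

theorem tmap_node {A : Type v} {B : Type w} (g : A → B) (k : K) (ts : I k → CTree K I A) :
    tmap (K := K) (I := I) g (CTree.node k ts) = CTree.node k (fun i => tmap g (ts i)) :=
  eq_of_dest_eq (by rw [dest_tmap_node g (dest_node k ts), dest_node])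

/-- Case analysis for coinductive trees. -/
def casesTree {A : Type v} (t : CTree K I A) :
    (Σ' a : A, t = CTree.leaf a) ⊕
      (Σ' (k : K) (ts : I k → CTree K I A), t = CTree.node k ts) :=
  match h : PFunctor.M.dest t with
  | ⟨Sum.inl a, _⟩ => Sum.inl ⟨a, by
      apply eq_of_dest_eq; rw [h, dest_leaf]
      congr; funext e; exact e.elim⟩
  | ⟨Sum.inr k, ts⟩ => Sum.inr ⟨k.down, fun i => ts ⟨i⟩, by
      apply eq_of_dest_eq; rw [h]; exact (dest_node (K := K) (I := I) k.down fun i => ts ⟨i⟩).symm⟩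

theorem leaf_inj {A : Type v} {a b : A}
    (h : CTree.leaf (K := K) (I := I) a = CTree.leaf b) : a = b := by
  have := congrArg (fun t => (PFunctor.M.dest t).1) h
  simp only [dest_leaf] at this
  exact Sum.inl.inj this

theorem leaf_ne_node {A : Type v} {a : A} {k : K} {ts : I k → CTree K I A}
    (h : CTree.leaf a = CTree.node k ts) : False := by
  have := congrArg (fun t => (PFunctor.M.dest t).1) h
  simp only [dest_leaf, dest_node] at this
  exact absurd this (by simp)

theorem node_inj_k {A : Type v} {k k' : K} {ts : I k → CTree K I A}
    {ts' : I k' → CTree K I A}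
    (h : CTree.node k ts = CTree.node k' ts') : k = k' := by
  have := congrArg (fun t => (PFunctor.M.dest t).1) h
  simp only [dest_node] at this
  have := Sum.inr.inj this
  exact congrArg ULift.down this

theorem node_inj {A : Type v} {k : K} {ts ts' : I k → CTree K I A}
    (h : CTree.node k ts = CTree.node k ts') : ts = ts' := by
  have h2 := congrArg PFunctor.M.dest h
  rw [dest_node, dest_node] at h2
  injection h2 with h2a h2b
  funext i
  exact congrFun h2b ⟨i⟩

/-- The corecursion body of `CTree.mu`, as a standalone definition. -/
def muBody {A : Type v} (s : CTree K I (CTree K I A) ⊕ CTree K I A) :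
    (CTreeP K I A) (CTree K I (CTree K I A) ⊕ CTree K I A) :=
  match s with
  | Sum.inl d' =>
      match PFunctor.M.dest d' with
      | ⟨Sum.inl t, _⟩ =>
          (match PFunctor.M.dest t with
          | ⟨Sum.inl a, _⟩ => ⟨Sum.inl a, fun e => e.elim⟩
          | ⟨Sum.inr k, ts⟩ => ⟨Sum.inr k, fun i => Sum.inr (ts i)⟩)
      | ⟨Sum.inr k, ds⟩ => ⟨Sum.inr k, fun i => Sum.inl (ds i)⟩
  | Sum.inr t =>
      match PFunctor.M.dest t with
      | ⟨Sum.inl a, _⟩ => ⟨Sum.inl a, fun e => e.elim⟩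
      | ⟨Sum.inr k, ts⟩ => ⟨Sum.inr k, fun i => Sum.inr (ts i)⟩

theorem mu_def {A : Type v} (d : CTree K I (CTree K I A)) :
    CTree.mu d = PFunctor.M.corec muBody (Sum.inl d) := rfl

/-- The `inr` mode of `mu`'s corecursion is the identity. -/
theorem mu_inr {A : Type v} (t : CTree K I A) :
    PFunctor.M.corec (muBody (K := K) (I := I) (A := A)) (Sum.inr t) = t := by
  apply PFunctor.M.bisim
    (fun x y => x = PFunctor.M.corec muBody (Sum.inr y))
  · intro x y hxy
    subst hxy
    rcases h : PFunctor.M.dest y with ⟨a | k, ch⟩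
    · refine ⟨Sum.inl a, fun e => e.elim, ch, ?_, rfl, fun i => i.elim⟩
      rw [PFunctor.M.dest_corec]
      simp only [muBody, h, PFunctor.map_eq]
      congr
      exact Sigma.ext rfl (heq_of_eq (funext fun e => PEmpty.elim e))
    · refine ⟨Sum.inr k, fun i => PFunctor.M.corec muBody (Sum.inr (ch i)), ch, ?_, rfl,
        fun i => rfl⟩
      rw [PFunctor.M.dest_corec]
      simp only [muBody, h, PFunctor.map_eq]
      rfl
  · rfl

/-- Naturality of `mu` with respect to `tmap`. -/
theorem mu_natural {A : Type v} {B : Type w} (g : A → B)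
    (d : CTree K I (CTree K I A)) :
    CTree.mu (tmap (tmap g) d) = tmap g (CTree.mu d) := by
  rw [mu_def, mu_def]
  apply PFunctor.M.bisim
    (fun x y => (∃ d : CTree K I (CTree K I A),
      x = PFunctor.M.corec muBody (Sum.inl (tmap (tmap g) d)) ∧
      y = tmap g (PFunctor.M.corec muBody (Sum.inl d))) ∨ x = y)
  · rintro x y (⟨d, rfl, rfl⟩ | rfl)
    · rcases hd : PFunctor.M.dest d with ⟨t | k, ch⟩
      · rcases ht : PFunctor.M.dest t with ⟨a | k, ts⟩
        · have hdd : PFunctor.M.dest (PFunctor.M.corec muBody (Sum.inl d))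
              = ⟨Sum.inl a, fun e => e.elim⟩ := by
            rw [PFunctor.M.dest_corec]
            simp only [muBody, hd, ht, PFunctor.map_eq]
            congr; exact Sigma.ext rfl (heq_of_eq (funext fun e => PEmpty.elim e))
          refine ⟨Sum.inl (g a), fun e => e.elim, fun e => e.elim, ?_, ?_, fun i => i.elim⟩
          · rw [PFunctor.M.dest_corec]
            simp only [muBody, dest_tmap_leaf (tmap g) hd, dest_tmap_leaf g ht,
              PFunctor.map_eq]
            congr; exact Sigma.ext rfl (heq_of_eq (funext fun e => PEmpty.elim e))
          · exact dest_tmap_leaf g hdd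
        · have hdd : PFunctor.M.dest (PFunctor.M.corec muBody (Sum.inl d))
              = ⟨Sum.inr k, fun i => PFunctor.M.corec muBody (Sum.inr (ts i))⟩ := by
            rw [PFunctor.M.dest_corec]
            simp only [muBody, hd, ht, PFunctor.map_eq]
            rfl
          refine ⟨Sum.inr ⟨k.down⟩,
            fun i => PFunctor.M.corec muBody (Sum.inr (tmap g (ts ⟨i.down⟩))),
            fun i => tmap g (PFunctor.M.corec muBody (Sum.inr (ts ⟨i.down⟩))), ?_, ?_, ?_⟩
          · rw [PFunctor.M.dest_corec]
            simp only [muBody, dest_tmap_leaf (tmap g) hd, dest_tmap_node g ht,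
              PFunctor.map_eq]
            rfl
          · exact dest_tmap_node g hdd
          · intro i
            right
            exact (mu_inr _).trans (congrArg (tmap g) (mu_inr _)).symm
      · have hdd : PFunctor.M.dest (PFunctor.M.corec muBody (Sum.inl d))
            = ⟨Sum.inr k, fun i => PFunctor.M.corec muBody (Sum.inl (ch i))⟩ := by
          rw [PFunctor.M.dest_corec]
          simp only [muBody, hd, PFunctor.map_eq]
          rfl
        refine ⟨Sum.inr ⟨k.down⟩,
          fun i => PFunctor.M.corec muBody (Sum.inl (tmap (tmap g) (ch ⟨i.down⟩))),
          fun i => tmap g (PFunctor.M.corec muBody (Sum.inl (ch ⟨i.down⟩))), ?_, ?_, ?_⟩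
        · rw [PFunctor.M.dest_corec]
          simp only [muBody, dest_tmap_node (tmap g) hd, PFunctor.map_eq]
          rfl
        · exact dest_tmap_node g hdd
        · intro i
          left
          exact ⟨ch ⟨i.down⟩, rfl, rfl⟩
    · rcases h : PFunctor.M.dest x with ⟨a, ch⟩
      exact ⟨a, ch, ch, rfl, rfl, fun i => Or.inr rfl⟩
  · exact Or.inl ⟨d, rfl, rfl⟩

end CTreeAux
end Aux
section AlphaLemmas
universe v' w'
namespace CTreeAux

variable {K : Type} {I : K → Type} {O : Type}
variable (πl : O → Bool) (πn : (k : K) → O → Test (I k × O))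
variable {A : Type v} {B : Type v'} {P : A → Type w} {Q : B → Type w'}

def alphaOfEq {t t' : CTree K I B} {o : O} (h : t = t') :
    Alpha πl πn Q o t → Alpha πl πn Q o t' := fun x => h ▸ x

mutual
def alphaFwd (g : A → B) (hPQ : ∀ a, P a → Q (g a)) :
    {o : O} → {t : CTree K I A} → Alpha πl πn P o t → Alpha πl πn Q o (tmap g t)
  | _, _, .leaf b p => alphaOfEq πl πn (tmap_leaf g _).symm (Alpha.leaf b (hPQ _ p))
  | _, _, .node ps => alphaOfEq πl πn (tmap_node g _ _).symm
      (Alpha.node (alphaTFwd g hPQ ps))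

def alphaTFwd (g : A → B) (hPQ : ∀ a, P a → Q (g a)) :
    {k : K} → {c : Test (I k × O)} → {Ps : I k → CTree K I A} →
    AlphaT πl πn P c Ps → AlphaT πl πn Q c (fun i => tmap g (Ps i))
  | _, _, _, .atom p => .atom (alphaFwd g hPQ p)
  | _, _, _, .tru => .tru
  | _, _, _, .and p q => .and (alphaTFwd g hPQ p) (alphaTFwd g hPQ q)
  | _, _, _, .orl p => .orl (alphaTFwd g hPQ p)
  | _, _, _, .orr p => .orr (alphaTFwd g hPQ p)
  | _, _, _, .all ps => .all (fun n => alphaTFwd g hPQ (ps n))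
  | _, _, _, .ex n p => .ex n (alphaTFwd g hPQ p)
end

mutual
def alphaBwd (g : A → B) (hQP : ∀ a, Q (g a) → P a) :
    {o : O} → {s : CTree K I B} → Alpha πl πn Q o s →
    (t : CTree K I A) → s = tmap g t → Alpha πl πn P o t
  | _, _, .leaf bq q, t, ht =>
    match casesTree t with
    | Sum.inl ⟨a, hta⟩ => by
        subst hta
        rw [tmap_leaf] at ht
        exact Alpha.leaf bq (hQP a (leaf_inj ht ▸ q))
    | Sum.inr ⟨k, ts, htn⟩ => by
        subst htn
        rw [tmap_node] at ht
        exact (leaf_ne_node ht).elim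
  | _, _, .node ps, t, ht =>
    match casesTree t with
    | Sum.inl ⟨a, hta⟩ => by
        subst hta
        rw [tmap_leaf] at ht
        exact (leaf_ne_node ht.symm).elim
    | Sum.inr ⟨k', ts, htn⟩ => by
        subst htn
        rw [tmap_node] at ht
        have hk := node_inj_k ht
        subst hk
        exact Alpha.node (alphaTBwd g hQP ps ts (node_inj ht))

def alphaTBwd (g : A → B) (hQP : ∀ a, Q (g a) → P a) :
    {k : K} → {c : Test (I k × O)} → {Ps' : I k → CTree K I B} →
    AlphaT πl πn Q c Ps' → (Ps : I k → CTree K I A) →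
    Ps' = (fun i => tmap g (Ps i)) → AlphaT πl πn P c Ps
  | _, _, _, .atom (x := x) p, Ps, hps =>
      .atom (alphaBwd g hQP p (Ps x) (congrFun hps x))
  | _, _, _, .tru, _, _ => .tru
  | _, _, _, .and p q, Ps, hps =>
      .and (alphaTBwd g hQP p Ps hps) (alphaTBwd g hQP q Ps hps)
  | _, _, _, .orl p, Ps, hps => .orl (alphaTBwd g hQP p Ps hps)
  | _, _, _, .orr p, Ps, hps => .orr (alphaTBwd g hQP p Ps hps)
  | _, _, _, .all ps, Ps, hps => .all (fun n => alphaTBwd g hQP (ps n) Ps hps)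
  | _, _, _, .ex n p, Ps, hps => .ex n (alphaTBwd g hQP p Ps hps)
end

end CTreeAux
end AlphaLemmas
section BetaLemmas
universe v₂ w₂
namespace CTreeAux

variable {K : Type} {I : K → Type} {O : Type}
variable (πl : O → Bool) (πn : (k : K) → O → Test (I k × O))
variable {A : Type v} {B : Type v₂} {P : A → Type w} {Q : B → Type w₂}

theorem betaWFStep_mono {R R' : BetaPf πl πn P → O → CTree K I A → Prop}
    (hRR : ∀ pf o t, R pf o t → R' pf o t) {pf o t}
    (hs : BetaWFStep πl πn P R pf o t) : BetaWFStep πl πn P R' pf o t := by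
  unfold BetaWFStep at *
  split at hs
  · exact hs
  · obtain ⟨h1, hk, hr⟩ := hs
    exact ⟨h1, hk, fun x hx => hRR _ _ _ (hr x hx)⟩
  · exact hs.elim

/-- `BetaWFStep` with the destructed arguments exposed. -/
def betaWFStepAux (R : BetaPf πl πn P → O → CTree K I A → Prop)
    (df : (BetaPF πl πn P) (BetaPf πl πn P)) (dt : (CTreeP K I A) (CTree K I A))
    (o : O) : Prop :=
  match df, dt with
  | ⟨Sum.inl ⟨o', a', _⟩, _⟩, ⟨Sum.inl a, _⟩ => o' = o ∧ a' = a
  | ⟨Sum.inr ⟨k', o', c⟩, ch⟩, ⟨Sum.inr k, ts⟩ =>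
      o' = o ∧ ∃ h : k' = k.down,
        ∀ (x : I k' × O) (hx : Sel.At c x),
          R (ch ⟨⟨x, hx⟩⟩) x.2 (ts ⟨h ▸ x.1⟩)
  | _, _ => False

theorem betaWFStep_def {R : BetaPf πl πn P → O → CTree K I A → Prop} {pf o t} :
    BetaWFStep πl πn P R pf o t
      = betaWFStepAux πl πn R (PFunctor.M.dest pf) (PFunctor.M.dest t) o := rfl

theorem betaWF_dest {pf o t} (hw : BetaWF πl πn P pf o t) :
    BetaWFStep πl πn P (BetaWF πl πn P) pf o t := by
  obtain ⟨R, hR, hr⟩ := hw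
  exact betaWFStep_mono πl πn (fun pf o t r => ⟨R, hR, r⟩) (hR _ _ _ hr)

end CTreeAux
end BetaLemmas
section BetaFwd
universe v₂ w₂
namespace CTreeAux

variable {K : Type} {I : K → Type} {O : Type}
variable (πl : O → Bool) (πn : (k : K) → O → Test (I k × O))

section WFFacts
variable {A : Type v} {P : A → Type w}

theorem wf_leaf_facts {pf : BetaPf πl πn P} {o : O} {t : CTree K I A}
    (hwf : BetaWF πl πn P pf o t) {po ch} (h1 : PFunctor.M.dest pf = ⟨Sum.inl po, ch⟩)
    {a : A} (ht : t = CTree.leaf a) : po.1 = o ∧ po.2.1 = a := by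
  subst ht
  have hs := betaWF_dest πl πn hwf
  rw [betaWFStep_def, h1, dest_leaf] at hs
  exact hs

theorem wf_leaf_node_absurd {pf : BetaPf πl πn P} {o : O} {t : CTree K I A}
    (hwf : BetaWF πl πn P pf o t) {po ch} (h1 : PFunctor.M.dest pf = ⟨Sum.inl po, ch⟩)
    {k ts} (ht : t = CTree.node k ts) : False := by
  subst ht
  have hs := betaWF_dest πl πn hwf
  rw [betaWFStep_def, h1, dest_node] at hs
  exact hs

theorem wf_node_leaf_absurd {pf : BetaPf πl πn P} {o : O} {t : CTree K I A}
    (hwf : BetaWF πl πn P pf o t) {nd ch} (h1 : PFunctor.M.dest pf = ⟨Sum.inr nd, ch⟩)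
    {a : A} (ht : t = CTree.leaf a) : False := by
  subst ht
  have hs := betaWF_dest πl πn hwf
  rw [betaWFStep_def, h1, dest_leaf] at hs
  exact hs

theorem wf_node_facts {pf : BetaPf πl πn P} {o : O} {t : CTree K I A}
    (hwf : BetaWF πl πn P pf o t) {nd ch} (h1 : PFunctor.M.dest pf = ⟨Sum.inr nd, ch⟩)
    {k ts} (ht : t = CTree.node k ts) :
    nd.2.1 = o ∧ ∃ hk : nd.1 = k,
      ∀ (x : I nd.1 × O) (hx : Sel.At nd.2.2 x),
        BetaWF πl πn P (ch ⟨⟨x, hx⟩⟩) x.2 (ts (hk ▸ x.1)) := by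
  subst ht
  have hs := betaWF_dest πl πn hwf
  obtain ⟨k', o', c⟩ := nd
  rw [betaWFStep_def, h1, dest_node] at hs
  exact hs

end WFFacts

variable {A : Type} {P : A → Type} {B : Type v₂} {Q : B → Type w₂}

/-- Transport of leaf evidence. -/
def psumTrans (g : A → B) (hPQ : ∀ a, P a → Q (g a)) {o' o : O} {a' a : A}
    (ho : o' = o) (ha : a' = a) :
    PSum (P a') (πl o' = false) → PSum (Q (g a)) (πl o = false)
  | PSum.inl p => PSum.inl (hPQ a (ha ▸ p))
  | PSum.inr hb => PSum.inr (ho ▸ hb)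

/-- States for the forward corecursion. -/
def FwdState : Type :=
  { x : O × CTree K I A //
      Nonempty (PSigma fun pf : BetaPf πl πn P => BetaWF πl πn P pf x.1 x.2) }

noncomputable def fwdBody (g : A → B) (hPQ : ∀ a, P a → Q (g a))
    (s : ULift.{max v₂ w₂} (FwdState πl πn (P := P))) :
    (BetaPF πl πn Q) (ULift.{max v₂ w₂} (FwdState πl πn (P := P))) :=
  match h2 : casesTree s.down.val.2,
        h1 : PFunctor.M.dest (Classical.choice s.down.property).1 with
  | Sum.inl ⟨a, _⟩, ⟨Sum.inl po, _⟩ =>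
      ⟨Sum.inl ⟨s.down.val.1, g a,
        psumTrans πl g hPQ
          (wf_leaf_facts πl πn (Classical.choice s.down.property).2 h1 ‹_›).1
          (wf_leaf_facts πl πn (Classical.choice s.down.property).2 h1 ‹_›).2
          po.2.2⟩,
        fun e => e.elim⟩
  | Sum.inl ⟨a, ht⟩, ⟨Sum.inr nd, _⟩ =>
      (wf_node_leaf_absurd πl πn (Classical.choice s.down.property).2 h1 ht).elim
  | Sum.inr ⟨k, ts, ht⟩, ⟨Sum.inl po, _⟩ =>
      (wf_leaf_node_absurd πl πn (Classical.choice s.down.property).2 h1 ht).elim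
  | Sum.inr ⟨k, ts, ht⟩, ⟨Sum.inr nd, ch⟩ =>
      ⟨Sum.inr nd, fun i =>
        ULift.up ⟨(i.down.1.2,
          ts ((wf_node_facts πl πn (Classical.choice s.down.property).2 h1 ht).2.choose
            ▸ i.down.1.1)),
          ⟨⟨ch ⟨i.down⟩,
            (wf_node_facts πl πn (Classical.choice s.down.property).2 h1 ht).2.choose_spec
              i.down.1 i.down.2⟩⟩⟩⟩

theorem fwd_wf (g : A → B) (hPQ : ∀ a, P a → Q (g a))
    (s : ULift.{max v₂ w₂} (FwdState πl πn (P := P))) :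
    BetaWF πl πn Q (PFunctor.M.corec (fwdBody πl πn g hPQ) s)
      s.down.val.1 (tmap g s.down.val.2) := by
  refine ⟨fun x o t => ∃ s, x = PFunctor.M.corec (fwdBody πl πn g hPQ) s ∧
    o = s.down.val.1 ∧ t = tmap g s.down.val.2, ?_, ⟨s, rfl, rfl, rfl⟩⟩
  rintro x o t ⟨s, rfl, rfl, rfl⟩
  erw [betaWFStep_def, PFunctor.M.dest_corec]
  unfold fwdBody
  split
  · next a hleaf po pch h2 h1 =>
      have h0 : PFunctor.M.dest s.down.val.2 = ⟨Sum.inl a, fun e => e.elim⟩ := by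
        rw [hleaf, dest_leaf]
      erw [PFunctor.map_eq, dest_tmap_leaf g h0]
      exact ⟨rfl, rfl⟩
  · next a ht nd ch h2 h1 =>
      exact (wf_node_leaf_absurd πl πn (Classical.choice s.down.property).2 h1 ht).elim
  · next k ts ht po ch h2 h1 =>
      exact (wf_leaf_node_absurd πl πn (Classical.choice s.down.property).2 h1 ht).elim
  · next k ts ht nd ch h2 h1 =>
      have h0 : PFunctor.M.dest s.down.val.2 = ⟨Sum.inr ⟨k⟩, fun i => ts i.down⟩ := by
        rw [ht, dest_node]
      erw [PFunctor.map_eq, dest_tmap_node g h0]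
      have hw := wf_node_facts πl πn (Classical.choice s.down.property).2 h1 ht
      exact ⟨hw.1, hw.2.choose, fun x hx => ⟨_, rfl, rfl, rfl⟩⟩

/-- Forward transport for the coinductive lifting. -/
noncomputable def betaFwd (g : A → B) (hPQ : ∀ a, P a → Q (g a)) {o : O} {t : CTree K I A}
    (b : Beta πl πn P o t) : Beta πl πn Q o (tmap g t) :=
  ⟨PFunctor.M.corec (fwdBody πl πn g hPQ) (ULift.up ⟨(o, t), ⟨b⟩⟩),
    fwd_wf πl πn g hPQ _⟩

end CTreeAux
end BetaFwd
section BetaBwd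
universe v₂ w₂
namespace CTreeAux

variable {K : Type} {I : K → Type} {O : Type}
variable (πl : O → Bool) (πn : (k : K) → O → Test (I k × O))
variable {A : Type} {P : A → Type} {B : Type v₂} {Q : B → Type w₂}

def psumTransB (g : A → B) (hQP : ∀ a, Q (g a) → P a) {o' o : O} {a' : B} {a : A}
    (ho : o' = o) (ha : a' = g a) :
    PSum (Q a') (πl o' = false) → PSum (P a) (πl o = false)
  | PSum.inl q => PSum.inl (hQP a (ha ▸ q))
  | PSum.inr hb => PSum.inr (ho ▸ hb)

/-- States for the backward corecursion. -/
def BwdState (g : A → B) : Type :=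
  { x : O × CTree K I A //
      Nonempty (PSigma fun pf : BetaPf πl πn Q => BetaWF πl πn Q pf x.1 (tmap g x.2)) }

noncomputable def bwdBody (g : A → B) (hQP : ∀ a, Q (g a) → P a)
    (s : BwdState πl πn (Q := Q) g) :
    (BetaPF πl πn P) (BwdState πl πn (Q := Q) g) :=
  match h2 : casesTree s.val.2,
        h1 : PFunctor.M.dest (Classical.choice s.property).1 with
  | Sum.inl ⟨a, ht⟩, ⟨Sum.inl po, _⟩ =>
      ⟨Sum.inl ⟨s.val.1, a,
        psumTransB πl g hQP
          (wf_leaf_facts πl πn (Classical.choice s.property).2 h1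
            (by rw [ht, tmap_leaf] : tmap g s.val.2 = CTree.leaf (g a))).1
          (wf_leaf_facts πl πn (Classical.choice s.property).2 h1
            (by rw [ht, tmap_leaf] : tmap g s.val.2 = CTree.leaf (g a))).2
          po.2.2⟩,
        fun e => e.elim⟩
  | Sum.inl ⟨a, ht⟩, ⟨Sum.inr nd, _⟩ =>
      (wf_node_leaf_absurd πl πn (Classical.choice s.property).2 h1
        (by rw [ht, tmap_leaf] : tmap g s.val.2 = CTree.leaf (g a))).elim
  | Sum.inr ⟨k, ts, ht⟩, ⟨Sum.inl po, _⟩ =>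
      (wf_leaf_node_absurd πl πn (Classical.choice s.property).2 h1
        (by rw [ht, tmap_node] :
          tmap g s.val.2 = CTree.node k (fun i => tmap g (ts i)))).elim
  | Sum.inr ⟨k, ts, ht⟩, ⟨Sum.inr nd, ch⟩ =>
      ⟨Sum.inr nd, fun i =>
        ⟨(i.down.1.2,
          ts ((wf_node_facts πl πn (Classical.choice s.property).2 h1
            (by rw [ht, tmap_node] :
              tmap g s.val.2 = CTree.node k (fun i => tmap g (ts i)))).2.choose
              ▸ i.down.1.1)),
          ⟨⟨ch ⟨i.down⟩,
            (wf_node_facts πl πn (Classical.choice s.property).2 h1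
              (by rw [ht, tmap_node] :
                tmap g s.val.2 = CTree.node k (fun i => tmap g (ts i)))).2.choose_spec
              i.down.1 i.down.2⟩⟩⟩⟩

theorem bwd_wf (g : A → B) (hQP : ∀ a, Q (g a) → P a)
    (s : BwdState πl πn (Q := Q) g) :
    BetaWF πl πn P (PFunctor.M.corec (bwdBody πl πn g hQP) s) s.val.1 s.val.2 := by
  refine ⟨fun x o t => ∃ s, x = PFunctor.M.corec (bwdBody πl πn g hQP) s ∧
    o = s.val.1 ∧ t = s.val.2, ?_, ⟨s, rfl, rfl, rfl⟩⟩
  rintro x o t ⟨s, rfl, rfl, rfl⟩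
  erw [betaWFStep_def, PFunctor.M.dest_corec]
  unfold bwdBody
  split
  · next a hleaf po pch h2 h1 =>
      have h0 : PFunctor.M.dest s.val.2 = ⟨Sum.inl a, fun e => e.elim⟩ := by
        rw [hleaf, dest_leaf]
      erw [PFunctor.map_eq, h0]
      exact ⟨rfl, rfl⟩
  · next a ht nd ch h2 h1 =>
      exact (wf_node_leaf_absurd πl πn (Classical.choice s.property).2 h1
        (by rw [ht, tmap_leaf])).elim
  · next k ts ht po ch h2 h1 =>
      exact (wf_leaf_node_absurd πl πn (Classical.choice s.property).2 h1
        (by rw [ht, tmap_node])).elim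
  · next k ts ht nd ch h2 h1 =>
      have h0 : PFunctor.M.dest s.val.2 = ⟨Sum.inr ⟨k⟩, fun i => ts i.down⟩ := by
        rw [ht, dest_node]
      erw [PFunctor.map_eq, h0]
      have hw := wf_node_facts πl πn (Classical.choice s.property).2 h1
        (show tmap g s.val.2 = CTree.node k (fun i => tmap g (ts i)) by rw [ht, tmap_node])
      exact ⟨hw.1, hw.2.choose, fun x hx => ⟨_, rfl, rfl, rfl⟩⟩

/-- Backward transport for the coinductive lifting. -/
noncomputable def betaBwd (g : A → B) (hQP : ∀ a, Q (g a) → P a) {o : O} {t : CTree K I A}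
    (b : Beta πl πn Q o (tmap g t)) : Beta πl πn P o t :=
  ⟨PFunctor.M.corec (bwdBody πl πn g hQP) ⟨(o, t), ⟨b⟩⟩,
    bwd_wf πl πn g hQP _⟩

end CTreeAux
end BetaBwd
/-- if `(O, πl, πn)` is strongly decomposable then
`Γ(Γ(R)) d₀ d₁` implies `Γ(R) (μ d₀) (μ d₁)`. -/
theorem gamma_mu_of_stronglyDecomposable
    {K : Type} {I : K → Type} {O : Type}
    (πl : O → Bool) (πn : (k : K) → O → Test (I k × O))
    (h : StronglyDecomposable πl πn)
    {A : Type} (R : A → A → Type)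
    (d₀ d₁ : CTree K I (CTree K I A)) :
    Nonempty (Gamma πl πn (Gamma πl πn R) d₀ d₁ → Gamma πl πn R (CTree.mu d₀) (CTree.mu d₁)) := by
  constructor
  intro G f hf o
  have hcorA : ∀ o₁ : O, RCorrect (Gamma πl πn R) (fun t => Alpha πl πn f o₁ t) :=
    fun o₁ t t' p γ => (γ f hf o₁).1 p
  have hcorB : ∀ o₁ : O, RCorrect (Gamma πl πn R) (fun t => coliftTree πl πn o₁ f t) :=
    fun o₁ t t' p γ => (γ f hf o₁).2 p
  have hDT : DTLe πl πn (CTreeAux.tmap (CTreeAux.tmap f) d₀)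
      (CTreeAux.tmap (CTreeAux.tmap f) d₁) := by
    intro o₀ o₁
    constructor
    · intro x
      have y : Alpha πl πn (fun t => Alpha πl πn f o₁ t) o₀ d₀ :=
        CTreeAux.alphaBwd πl πn (CTreeAux.tmap f)
          (fun t q => CTreeAux.alphaBwd πl πn f (fun a p => p) q t rfl) x d₀ rfl
      have y' := (G (fun t => Alpha πl πn f o₁ t) (hcorA o₁) o₀).1 y
      exact CTreeAux.alphaFwd πl πn (CTreeAux.tmap f)
        (fun t p => CTreeAux.alphaFwd πl πn f (fun a q => q) p) y'
    · intro x
      have y : Beta πl (fun k o' => dualTest (πn k o'))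
          (fun t => coliftTree πl πn o₁ f t) o₀ d₀ :=
        CTreeAux.betaBwd πl (fun k o' => dualTest (πn k o')) (CTreeAux.tmap f)
          (fun t q => CTreeAux.betaBwd πl (fun k o' => dualTest (πn k o')) f
            (fun a p => p) q) x
      have y' := (G (fun t => coliftTree πl πn o₁ f t) (hcorB o₁) o₀).2 y
      exact CTreeAux.betaFwd πl (fun k o' => dualTest (πn k o')) (CTreeAux.tmap f)
        (fun t p => CTreeAux.betaFwd πl (fun k o' => dualTest (πn k o')) f
          (fun a q => q) p) y'
  have hST := h _ _ hDT
  constructor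
  · intro ha
    have s1 : Alpha πl πn (fun X => X) o (CTreeAux.tmap f (CTree.mu d₀)) :=
      CTreeAux.alphaFwd πl πn f (fun a p => p) ha
    have s2 : algA πl πn o (CTree.mu (CTreeAux.tmap (CTreeAux.tmap f) d₀)) := by
      rw [CTreeAux.mu_natural]; exact s1
    have s3 := (hST o).1 s2
    rw [CTreeAux.mu_natural] at s3
    exact CTreeAux.alphaBwd πl πn f (fun a p => p) s3 (CTree.mu d₁) rfl
  · intro hb
    have s1 : Beta πl (fun k o' => dualTest (πn k o')) (fun X => X) o
        (CTreeAux.tmap f (CTree.mu d₀)) :=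
      CTreeAux.betaFwd πl (fun k o' => dualTest (πn k o')) f (fun a p => p) hb
    have s2 : algB πl πn o (CTree.mu (CTreeAux.tmap (CTreeAux.tmap f) d₀)) := by
      rw [CTreeAux.mu_natural]; exact s1
    have s3 := (hST o).2 s2
    rw [CTreeAux.mu_natural] at s3
    exact CTreeAux.betaBwd πl (fun k o' => dualTest (πn k o')) f (fun a p => p) s3
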